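/- Let S ≥ 1, P ∈ {1,...,S}, σ ≥ 0, ξ ≥ 0, and let v ∈ (ℝ⁺)^S be a nondecreasingly sorted vector. Then for every k ∈ {1,...,P}, Σ_{i=k}^S G̃^P(v)(i) = Σ_{i=k, i≠P}^S [v(i) − ξ]⁺ + [v(P) + σ − ξ]⁺, where G̃^P(v) = sort([v + σ·e_P − ξ·1]⁺). -/

import Mathlib

open Finset

/-- The nondecreasing rearrangement of a finite real vector. -/
noncomputable def sortVec {S : ℕ} (u : Fin S → ℝ) : Fin S → ℝ := u ∘ Tuple.sort u

/-- The Schur-convex semi-ordering `≺_c` : equal total sums, and each tail sum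
(from the second coordinate on) of the sorted version of `u` is dominated by that of `v`. -/
def schurLE {S : ℕ} (u v : Fin S → ℝ) : Prop :=
  (∑ i, u i = ∑ i, v i) ∧
  ∀ k : Fin S, 1 ≤ (k : ℕ) →
    ∑ i ∈ Finset.Ici k, sortVec u i ≤ ∑ i ∈ Finset.Ici k, sortVec v i

/-- The semi-ordering `≺_*` : every tail sum of `u` is dominated by that of `v`. -/
def starLE {S : ℕ} (u v : Fin S → ℝ) : Prop :=
  ∀ k : Fin S, ∑ i ∈ Finset.Ici k, u i ≤ ∑ i ∈ Finset.Ici k, v i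

/-- The semi-ordering `≺_P` : `u ≺_* v` and `u(ℓ) ≤ v(ℓ)` for every `ℓ ≥ P`. -/
def precP {S : ℕ} (P : Fin S) (u v : Fin S → ℝ) : Prop :=
  starLE u v ∧ ∀ ℓ : Fin S, P ≤ ℓ → u ℓ ≤ v ℓ

/-- The map `G̃^P : u ↦ sort([u + σ·e_P − ξ·1]⁺)`.  For `P` the first index,
this is the Kiefer–Wolfowitz map `G`. -/
noncomputable def GP {S : ℕ} (σ ξ : ℝ) (P : Fin S) (u : Fin S → ℝ) : Fin S → ℝ :=
  sortVec (fun i => max (u i + (if i = P then σ else 0) - ξ) 0)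


lemma sum_le_of_sep {S : ℕ} {w : Fin S → ℝ} {A B : Finset (Fin S)}
    (hcard : A.card = B.card)
    (h : ∀ a ∈ A \ B, ∀ b ∈ B \ A, w a ≤ w b) :
    ∑ a ∈ A, w a ≤ ∑ b ∈ B, w b := by
  have key : ∑ a ∈ A \ B, w a ≤ ∑ b ∈ B \ A, w b := by
    rcases (B \ A).eq_empty_or_nonempty with he | hne
    · have hc : (A \ B).card = (B \ A).card := by
        rw [card_sdiff_comm hcard]
      rw [he] at hc ⊢
      rw [Finset.card_empty] at hc
      rw [Finset.card_eq_zero.mp hc]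
    · obtain ⟨b0, hb0, hb0min⟩ := Finset.exists_min_image (B \ A) w hne
      have hc : (A \ B).card = (B \ A).card := by rw [card_sdiff_comm hcard]
      calc ∑ a ∈ A \ B, w a ≤ (A \ B).card • w b0 :=
            Finset.sum_le_card_nsmul _ _ _ (fun a ha => h a ha b0 hb0)
        _ = (B \ A).card • w b0 := by rw [hc]
        _ ≤ ∑ b ∈ B \ A, w b := Finset.card_nsmul_le_sum _ _ _ hb0min
  have hA : ∑ a ∈ A, w a = ∑ a ∈ A ∩ B, w a + ∑ a ∈ A \ B, w a :=
    (Finset.sum_inter_add_sum_sdiff A B w).symm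
  have hB : ∑ b ∈ B, w b = ∑ b ∈ B ∩ A, w b + ∑ b ∈ B \ A, w b :=
    (Finset.sum_inter_add_sum_sdiff B A w).symm
  rw [hA, hB, Finset.inter_comm]
  exact add_le_add_right key _


/-- tail sums of `G̃^P(v)` for `k ≤ P`. -/
theorem tailSum_GP {S : ℕ} (hS : 0 < S) (P : Fin S) (σ ξ : ℝ)
    (hσ : 0 ≤ σ) (hξ : 0 ≤ ξ)
    (v : Fin S → ℝ) (hv : Monotone v) (hv0 : ∀ i, 0 ≤ v i)
    (k : Fin S) (hk : k ≤ P) :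
    ∑ i ∈ Finset.Ici k, GP σ ξ P v i =
      (∑ i ∈ (Finset.Ici k).erase P, max (v i - ξ) 0) +
        max (v P + σ - ξ) 0 := by
  set w : Fin S → ℝ := fun i => max (v i + (if i = P then σ else 0) - ξ) 0 with hw
  set τ := Tuple.sort w with hτ
  have hmono : Monotone (w ∘ τ) := Tuple.monotone_sort w
  have hstep1 : ∑ i ∈ Finset.Ici k, GP σ ξ P v i = ∑ j ∈ (Finset.Ici k).image τ, w j := by
    rw [Finset.sum_image (fun a _ b _ h => τ.injective h)]
    rfl
  set A := (Finset.Ici k).image (⇑τ) with hA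
  have hcard : A.card = (Finset.Ici k).card := Finset.card_image_of_injective _ τ.injective
  -- w on indices below k is ≤ w on indices in Ici k
  have hsep : ∀ a : Fin S, a < k → ∀ b ∈ Finset.Ici k, w a ≤ w b := by
    intro a ha b hb
    have hak : a ≠ P := fun h => absurd (h ▸ ha) (not_lt.mpr hk)
    have hbk : k ≤ b := Finset.mem_Ici.mp hb
    have hab : v a ≤ v b := hv (le_of_lt (lt_of_lt_of_le ha hbk))
    simp only [hw, if_neg hak]
    apply max_le_max _ le_rfl
    split_ifs <;> linarith
  have h1 : ∑ j ∈ A, w j ≤ ∑ j ∈ Finset.Ici k, w j := by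
    apply sum_le_of_sep hcard
    intro a ha b hb
    have ha' : a ∉ Finset.Ici k := (Finset.mem_sdiff.mp ha).2
    exact hsep a (lt_of_not_ge (fun h => ha' (Finset.mem_Ici.mpr h))) b (Finset.mem_sdiff.mp hb).1
  have h2 : ∑ j ∈ Finset.Ici k, w j ≤ ∑ j ∈ A, w j := by
    apply sum_le_of_sep hcard.symm
    intro a ha b hb
    obtain ⟨haI, haA⟩ := Finset.mem_sdiff.mp ha
    obtain ⟨hbA, hbI⟩ := Finset.mem_sdiff.mp hb
    obtain ⟨j, hj, hjb⟩ := Finset.mem_image.mp hbA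
    have hi : τ.symm a ∉ Finset.Ici k := by
      intro hmem
      exact haA (Finset.mem_image.mpr ⟨τ.symm a, hmem, τ.apply_symm_apply a⟩)
    have hij : τ.symm a ≤ j := le_of_lt (lt_of_not_ge (fun h => hi (Finset.mem_Ici.mpr (le_trans (Finset.mem_Ici.mp hj) h))))
    have := hmono hij
    simpa [hjb, τ.apply_symm_apply] using this
  have heq := le_antisymm h1 h2
  rw [hstep1, heq]
  have hP : P ∈ Finset.Ici k := Finset.mem_Ici.mpr hk
  rw [← Finset.sum_erase_add _ _ hP]
  congr 1
  · apply Finset.sum_congr rfl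
    intro i hi
    have : i ≠ P := Finset.ne_of_mem_erase hi
    simp [hw, this]
  · simp [hw]
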